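/- arXiv:2108.13631 — 2 statements merged into one kernel-verified Lean document; each statement's English description precedes it below -/
import Mathlib

section
/- For every natural number $n$, the identity of polynomials $x^n = \sum_{k=0}^{n} \Big( 2^{-n}\, n! \sum_{v=0}^{k} \sum_{l=0}^{k-v} \frac{(-1)^{l}\,(2(n-v-l)+1)!!}{(k-v-l)!\,(2n-v-l-k+1)!\; v!\; l!} \Big) V_{n-k}(2x-1)$ holds in $\mathbb{R}[x]$. -/
open Polynomial Finset

/-- The Jacobi polynomial `P_n^{(a,b)}`, defined by
`P_n^{(a,b)}(z) = ∑_{l=0}^n (n+a+b+1)_l (a+l+1)_{n-l} / (l! (n-l)!) ((z-1)/2)^l`. -/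
noncomputable def jacobiP (a b : ℝ) (n : ℕ) : ℝ[X] :=
  ∑ l ∈ range (n + 1),
    C (((ascPochhammer ℝ l).eval ((n : ℝ) + a + b + 1) *
        (ascPochhammer ℝ (n - l)).eval (a + l + 1)) /
       (l.factorial * (n - l).factorial)) * (C (1 / 2) * (X - 1)) ^ l

/-- The Chebyshev polynomial of the third kind, `V_n(x) = 2^{2n}/C(2n,n) ⬝ P_n^{(-1/2,1/2)}(x)`. -/
noncomputable def chebV (n : ℕ) : ℝ[X] :=
  C ((2 : ℝ) ^ (2 * n) / ((2 * n).choose n : ℝ)) * jacobiP (-(1 / 2)) (1 / 2) n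

/-- The Chebyshev polynomial of the fourth kind, `W_n(x) = 2^{2n}/C(2n,n) ⬝ P_n^{(1/2,-1/2)}(x)`. -/
noncomputable def chebW (n : ℕ) : ℝ[X] :=
  C ((2 : ℝ) ^ (2 * n) / ((2 * n).choose n : ℝ)) * jacobiP (1 / 2) (-(1 / 2)) n

lemma ptwise (M q : ℕ) :
    (M+2).choose (q+2) + 2 * (M+1).choose (q+2) + M.choose (q+2)
      = M.choose q + 4 * (M+1).choose (q+2) := by
  have h1 : (M+2).choose (q+2) = (M+1).choose (q+1) + (M+1).choose (q+2) :=
    Nat.choose_succ_succ (M+1) (q+1)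
  have h2 : (M+1).choose (q+1) = M.choose q + M.choose (q+1) := Nat.choose_succ_succ M q
  have h3 : (M+1).choose (q+2) = M.choose (q+1) + M.choose (q+2) := Nat.choose_succ_succ M (q+1)
  omega

lemma shift_step (N m : ℕ) (T : ℕ → ℕ) :
    ∑ k ∈ range (m+1), (N+1).choose k * T k
      = ∑ k ∈ range m, N.choose k * T (k+1) + ∑ k ∈ range (m+1), N.choose k * T k := by
  rw [Finset.sum_range_succ' (fun k => (N+1).choose k * T k) m,
      Finset.sum_range_succ' (fun k => N.choose k * T k) m]
  simp only [Nat.choose_succ_succ, add_mul, Finset.sum_add_distrib, Nat.choose_zero_right]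
  ring

lemma key_binom : ∀ l m : ℕ,
    ∑ k ∈ range (m+1), (2*l+2*m+1).choose k * (2*l+m-k).choose (2*l)
      = 4^m * (l+m).choose l := by
  intro l
  induction l with
  | zero =>
    intro m
    simpa using Nat.sum_range_choose_halfway m
  | succ l ihl =>
    intro m
    induction m with
    | zero => simp
    | succ m ihm =>
      set N := 2*l+2*m+3 with hN
      have e4 : 2*(l+1) = 2*l+2 := by ring
      have hT : ∀ k, 2*(l+1)+(m+1)-k = 2*l+m+3-k := by intro k; omega
      have e1 : 2*(l+1)+2*(m+1)+1 = N+2 := by omega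
      have lhs_eq : ∑ k ∈ range (m+2), (2*(l+1)+2*(m+1)+1).choose k * (2*(l+1)+(m+1)-k).choose (2*(l+1))
          = ∑ k ∈ range (m+2), (N+2).choose k * (2*l+m+3-k).choose (2*l+2) := by
        apply Finset.sum_congr rfl; intro k hk
        rw [e1, hT k, e4]
      rw [lhs_eq]
      set T : ℕ → ℕ := fun k => (2*l+m+3-k).choose (2*l+2) with hTdef
      have step1 : ∑ k ∈ range (m+2), (N+2).choose k * T k
          = ∑ k ∈ range (m+1), (N+1).choose k * T (k+1) + ∑ k ∈ range (m+2), (N+1).choose k * T k :=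
        shift_step (N+1) (m+1) T
      have step2 : ∑ k ∈ range (m+2), (N+1).choose k * T k
          = ∑ k ∈ range (m+1), N.choose k * T (k+1) + ∑ k ∈ range (m+2), N.choose k * T k :=
        shift_step N (m+1) T
      have step3 : ∑ k ∈ range (m+1), (N+1).choose k * T (k+1)
          = ∑ k ∈ range m, N.choose k * T (k+2) + ∑ k ∈ range (m+1), N.choose k * T (k+1) :=
        shift_step N m (fun k => T (k+1))
      have zA : T (m+2) = 0 := by
        simp only [hTdef]
        rw [show 2*l+m+3-(m+2) = 2*l+1 by omega]
        exact Nat.choose_eq_zero_of_lt (by omega)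
      have zB : T (m+3) = 0 := by
        simp only [hTdef]
        rw [show 2*l+m+3-(m+3) = 2*l by omega]
        exact Nat.choose_eq_zero_of_lt (by omega)
      have ext1 : ∑ k ∈ range (m+2), N.choose k * T (k+2)
          = ∑ k ∈ range m, N.choose k * T (k+2) := by
        rw [Finset.sum_range_succ, Finset.sum_range_succ, zA, zB]; ring
      have ext2 : ∑ k ∈ range (m+2), N.choose k * T (k+1)
          = ∑ k ∈ range (m+1), N.choose k * T (k+1) := by
        rw [Finset.sum_range_succ, zA]; ring
      rw [step1, step2, step3, ← ext1, ← ext2]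
      have comb : ∑ k ∈ range (m+2), N.choose k * T (k+2)
            + ∑ k ∈ range (m+2), N.choose k * T (k+1)
            + (∑ k ∈ range (m+2), N.choose k * T (k+1)
              + ∑ k ∈ range (m+2), N.choose k * T k)
          = ∑ k ∈ range (m+2), N.choose k * ((2*l+m+1-k).choose (2*l))
            + 4 * ∑ k ∈ range (m+2), N.choose k * ((2*l+m+2-k).choose (2*l+2)) := by
        rw [Finset.mul_sum, ← Finset.sum_add_distrib, ← Finset.sum_add_distrib,
            ← Finset.sum_add_distrib, ← Finset.sum_add_distrib]
        apply Finset.sum_congr rfl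
        intro k hk
        have hkm : k ≤ m+1 := Nat.lt_succ_iff.mp (Finset.mem_range.mp hk)
        simp only [hTdef]
        rw [show 2*l+m+3-(k+2) = 2*l+m+1-k by omega,
            show 2*l+m+3-(k+1) = (2*l+m+1-k)+1 by omega,
            show 2*l+m+3-k = (2*l+m+1-k)+2 by omega,
            show 2*l+m+2-k = (2*l+m+1-k)+1 by omega]
        calc N.choose k * ((2*l+m+1-k).choose (2*l+2))
              + N.choose k * (((2*l+m+1-k)+1).choose (2*l+2))
              + (N.choose k * (((2*l+m+1-k)+1).choose (2*l+2))
                + N.choose k * (((2*l+m+1-k)+2).choose (2*l+2)))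
            = N.choose k * (((2*l+m+1-k)+2).choose (2*l+2)
                + 2 * ((2*l+m+1-k)+1).choose (2*l+2) + (2*l+m+1-k).choose (2*l+2)) := by ring
          _ = N.choose k * ((2*l+m+1-k).choose (2*l) + 4 * ((2*l+m+1-k)+1).choose (2*l+2)) := by
              rw [ptwise]
          _ = N.choose k * ((2*l+m+1-k).choose (2*l))
              + 4 * (N.choose k * (((2*l+m+1-k)+1).choose (2*l+2))) := by ring
      rw [comb]
      have shrink : ∑ k ∈ range (m+2), N.choose k * ((2*l+m+2-k).choose (2*l+2))
          = ∑ k ∈ range (m+1), N.choose k * ((2*l+m+2-k).choose (2*l+2)) := by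
        rw [Finset.sum_range_succ, show 2*l+m+2-(m+1) = 2*l+1 by omega,
            Nat.choose_eq_zero_of_lt (show 2*l+1 < 2*l+2 by omega)]
        ring
      rw [shrink]
      have ih1 : ∑ k ∈ range (m+2), N.choose k * ((2*l+m+1-k).choose (2*l))
          = 4^(m+1) * (l+(m+1)).choose l := by
        have h := ihl (m+1)
        have e : 2*l+2*(m+1)+1 = N := by omega
        have e2 : ∀ k, 2*l+(m+1)-k = 2*l+m+1-k := by intro k; omega
        simp only [e, e2] at h
        exact h
      have ih2 : ∑ k ∈ range (m+1), N.choose k * ((2*l+m+2-k).choose (2*l+2))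
          = 4^m * (l+1+m).choose (l+1) := by
        have h := ihm
        have e : 2*l+2+2*m+1 = N := by omega
        have e2 : ∀ k, 2*l+2+m-k = 2*l+m+2-k := by intro k; omega
        simp only [e4] at h
        simp only [e, e2] at h
        exact h
      rw [ih1, ih2]
      have pasc : (l+1+(m+1)).choose (l+1) = (l+(m+1)).choose l + (l+1+m).choose (l+1) := by
        have h := Nat.choose_succ_succ (l+m+1) l
        simp only [Nat.succ_eq_add_one] at h
        rw [show l+1+(m+1) = (l+m+1)+1 by omega, h,
            show l+(m+1) = l+m+1 by omega, show l+1+m = l+m+1 by omega]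
      rw [pasc]
      ring
lemma asc_nat (a l : ℕ) : (ascPochhammer ℝ l).eval ((a : ℝ) + 1)
    = (l.factorial : ℝ) * (a + l).choose l := by
  rw [show ((a:ℝ)+1) = ((a+1 : ℕ) : ℝ) by push_cast; ring, ← ascPochhammer_eval_cast,
    ascPochhammer_nat_eq_ascFactorial, Nat.ascFactorial_eq_factorial_mul_choose]
  push_cast
  ring

lemma asc_half (l : ℕ) : ∀ m : ℕ, (ascPochhammer ℝ m).eval ((l : ℝ) + 1/2)
    = ((2*(l+m)).factorial : ℝ) * l.factorial / ((2*l).factorial * (l+m).factorial * 4^m) := by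
  intro m
  induction m with
  | zero =>
    simp only [ascPochhammer_zero, eval_one, Nat.mul_zero, Nat.add_zero, pow_zero, mul_one]
    rw [eq_comm, div_eq_one_iff_eq (by positivity)]
  | succ m ih =>
    rw [ascPochhammer_succ_right, eval_mul, ih, eval_add, eval_X, eval_natCast]
    have e1 : 2*(l+(m+1)) = 2*(l+m)+1+1 := by ring
    have e2 : l+(m+1) = (l+m)+1 := by ring
    rw [e1, e2, Nat.factorial_succ, Nat.factorial_succ, Nat.factorial_succ]
    have h1 : ((2*l).factorial : ℝ) ≠ 0 := by positivity
    have h2 : ((l+m).factorial : ℝ) ≠ 0 := by positivity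
    have h3 : ((2*(l+m)).factorial : ℝ) ≠ 0 := by positivity
    have h4 : (4:ℝ)^m ≠ 0 := by positivity
    field_simp
    push_cast
    ring

lemma chebV_eq (n : ℕ) : chebV n = ∑ l ∈ range (n+1),
    C ((2:ℝ)^l * (n+l).factorial / ((2*l).factorial * (n-l).factorial)) * (X - 1)^l := by
  unfold chebV jacobiP
  rw [Finset.mul_sum]
  apply Finset.sum_congr rfl
  intro l hl
  have hln : l ≤ n := Nat.lt_succ_iff.mp (Finset.mem_range.mp hl)
  have harg1 : (n : ℝ) + (-(1/2)) + 1/2 + 1 = (n : ℝ) + 1 := by ring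
  have harg2 : (-(1/2) : ℝ) + l + 1 = (l : ℝ) + 1/2 := by ring
  rw [harg1, harg2, asc_nat n l, asc_half l (n-l)]
  have hstruct : ∀ (a b : ℝ) (p : ℝ[X]), C a * (C b * p) = C (a*b) * p := fun a b p => by
    rw [← mul_assoc, ← C_mul]
  rw [mul_pow, ← C_pow, hstruct, hstruct]
  rw [show l + (n - l) = n from by omega]
  congr 1
  have c1 : ((2*n).choose n : ℝ) * (n.factorial * n.factorial) = (2*n).factorial := by
    have h := Nat.choose_mul_factorial_mul_factorial (show n ≤ 2*n by omega)
    rw [show 2*n - n = n from by omega, mul_assoc] at h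
    exact_mod_cast h
  have c2 : ((n+l).choose l : ℝ) * (l.factorial * n.factorial) = (n+l).factorial := by
    have h := Nat.choose_mul_factorial_mul_factorial (show l ≤ n+l by omega)
    rw [show n + l - l = n from by omega, mul_assoc] at h
    exact_mod_cast h
  have hpow : (4:ℝ)^(n-l) * 4^l = 4^n := by
    rw [← pow_add]; congr 1; omega
  have h2n : (2:ℝ)^(2*n) = 4^n := by rw [pow_mul]; norm_num
  have h4l : (4:ℝ)^l = 2^l * 2^l := by
    rw [show (4:ℝ) = 2*2 by norm_num, mul_pow]
  have f1 : ((2*n).choose n : ℝ) ≠ 0 :=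
    Nat.cast_ne_zero.mpr (Nat.choose_pos (show n ≤ 2*n by omega)).ne'
  have f2 : (l.factorial : ℝ) ≠ 0 := by positivity
  have f3 : ((n-l).factorial : ℝ) ≠ 0 := by positivity
  have f4 : ((2*l).factorial : ℝ) ≠ 0 := by positivity
  have f5 : (n.factorial : ℝ) ≠ 0 := by positivity
  have f6 : (4:ℝ)^(n-l) ≠ 0 := by positivity
  congr 1
  rw [h2n, ← hpow, ← c1, ← c2, h4l]
  rw [one_div, inv_pow]
  field_simp

lemma chebV_comp (m : ℕ) : (chebV m).comp (2*X - 1) =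
    ∑ l ∈ range (m+1), C ((4:ℝ)^l * (m+l).factorial / ((2*l).factorial * (m-l).factorial)) * (X - 1)^l := by
  rw [chebV_eq]
  rw [Polynomial.sum_comp]
  apply Finset.sum_congr rfl
  intro l hl
  have h2 : ((2*X - 1 : ℝ[X]) - 1) = C 2 * (X - 1) := by
    have hC2 : (C (2:ℝ)) = 2 := by
      have h := Polynomial.C_eq_natCast (R := ℝ) 2
      norm_num at h ⊢
      exact_mod_cast h
    rw [hC2]; ring
  rw [mul_comp, C_comp, pow_comp, sub_comp, X_comp, one_comp, h2, mul_pow, ← C_pow, ← mul_assoc]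
  rw [mul_comm (C ((2:ℝ)^l * _ / _)) (C ((2:ℝ)^l)), ← C_mul]
  congr 1
  rw [show (4:ℝ)^l = 2^l * 2^l from by rw [show (4:ℝ) = 2*2 by norm_num, mul_pow]]
  ring

lemma tri_swap {M : Type*} [AddCommMonoid M] (n : ℕ) (F : ℕ → ℕ → M) :
    ∑ k ∈ range (n+1), ∑ l ∈ range (n-k+1), F k l
      = ∑ l ∈ range (n+1), ∑ k ∈ range (n-l+1), F k l := by
  rw [Finset.sum_sigma', Finset.sum_sigma']
  apply Finset.sum_nbij' (fun p => (⟨p.2, p.1⟩ : Σ _ : ℕ, ℕ)) (fun p => (⟨p.2, p.1⟩ : Σ _ : ℕ, ℕ))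
  · rintro ⟨k, l⟩ h
    simp only [Finset.mem_sigma, Finset.mem_range] at h ⊢
    omega
  · rintro ⟨l, k⟩ h
    simp only [Finset.mem_sigma, Finset.mem_range] at h ⊢
    omega
  · rintro ⟨k, l⟩ _; rfl
  · rintro ⟨l, k⟩ _; rfl
  · rintro ⟨k, l⟩ _; rfl

lemma tri_reindex {M : Type*} [AddCommMonoid M] (k : ℕ) (F : ℕ → ℕ → M) :
    ∑ v ∈ range (k+1), ∑ l ∈ range (k-v+1), F v l
      = ∑ j ∈ range (k+1), ∑ l ∈ range (j+1), F (j-l) l := by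
  rw [Finset.sum_sigma', Finset.sum_sigma']
  apply Finset.sum_nbij' (fun p => (⟨p.1 + p.2, p.2⟩ : Σ _ : ℕ, ℕ))
    (fun p => (⟨p.1 - p.2, p.2⟩ : Σ _ : ℕ, ℕ))
  · rintro ⟨v, l⟩ h
    simp only [Finset.mem_sigma, Finset.mem_range] at h ⊢
    omega
  · rintro ⟨j, l⟩ h
    simp only [Finset.mem_sigma, Finset.mem_range] at h ⊢
    omega
  · rintro ⟨v, l⟩ h
    simp only [Finset.mem_sigma, Finset.mem_range] at h
    simp only [Sigma.mk.inj_iff, heq_eq_eq, and_true]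
    omega
  · rintro ⟨j, l⟩ h
    simp only [Finset.mem_sigma, Finset.mem_range] at h
    simp only [Sigma.mk.inj_iff, heq_eq_eq, and_true]
    omega
  · rintro ⟨v, l⟩ h
    simp only [Finset.mem_sigma, Finset.mem_range] at h
    simp only []
    congr 1
    omega

lemma coeff_collapse (n k : ℕ) (hk : k ≤ n) :
    (2 : ℝ) ^ (-(n : ℤ)) * n.factorial *
      ∑ v ∈ range (k + 1), ∑ l ∈ range (k - v + 1),
        (-1 : ℝ) ^ l * (Nat.doubleFactorial (2 * (n - v - l) + 1) : ℝ) /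
        ((k - v - l).factorial * (2 * n - v - l - k + 1).factorial *
          v.factorial * l.factorial)
    = ((2 * n + 1).choose k : ℝ) / 4 ^ n := by
  have hsum : ∑ v ∈ range (k + 1), ∑ l ∈ range (k - v + 1),
        (-1 : ℝ) ^ l * (Nat.doubleFactorial (2 * (n - v - l) + 1) : ℝ) /
        ((k - v - l).factorial * (2 * n - v - l - k + 1).factorial *
          v.factorial * l.factorial)
      = (Nat.doubleFactorial (2 * n + 1) : ℝ) / (k.factorial * (2 * n - k + 1).factorial) := by
    rw [tri_reindex k (fun v l => (-1 : ℝ) ^ l * (Nat.doubleFactorial (2 * (n - v - l) + 1) : ℝ) /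
        ((k - v - l).factorial * (2 * n - v - l - k + 1).factorial * v.factorial * l.factorial))]
    have inner : ∀ j ∈ range (k+1),
        (∑ l ∈ range (j + 1),
          (-1 : ℝ) ^ l * (Nat.doubleFactorial (2 * (n - (j-l) - l) + 1) : ℝ) /
          ((k - (j-l) - l).factorial * (2 * n - (j-l) - l - k + 1).factorial *
            (j-l).factorial * l.factorial))
        = if j = 0 then (Nat.doubleFactorial (2 * n + 1) : ℝ) /
            (k.factorial * (2 * n - k + 1).factorial) else 0 := by
      intro j hj
      have hjk : j ≤ k := Nat.lt_succ_iff.mp (Finset.mem_range.mp hj)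
      have halt : ∑ l ∈ range (j+1), ((-1:ℝ)^l * (j.choose l : ℝ)) = if j = 0 then 1 else 0 := by
        cases j with
        | zero => simp
        | succ i =>
          have h := Int.alternating_sum_range_choose (n := i+1)
          rw [if_neg (Nat.succ_ne_zero i)] at h
          have h' : ((∑ m ∈ range (i+1+1), ((-1) ^ m * ((i+1).choose m) : ℤ) : ℤ) : ℝ) = 0 := by
            rw [h]; norm_num
          push_cast at h'
          rw [if_neg (Nat.succ_ne_zero i)]
          exact h'
      have step : ∀ l ∈ range (j+1),
          (-1 : ℝ) ^ l * (Nat.doubleFactorial (2 * (n - (j-l) - l) + 1) : ℝ) /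
          ((k - (j-l) - l).factorial * (2 * n - (j-l) - l - k + 1).factorial *
            (j-l).factorial * l.factorial)
          = ((-1:ℝ)^l * (j.choose l : ℝ)) *
            ((Nat.doubleFactorial (2 * (n - j) + 1) : ℝ) /
              ((k - j).factorial * (2 * n - j - k + 1).factorial * j.factorial)) := by
        intro l hl
        have hlj : l ≤ j := Nat.lt_succ_iff.mp (Finset.mem_range.mp hl)
        rw [show n - (j-l) - l = n - j from by omega,
            show k - (j-l) - l = k - j from by omega,
            show 2 * n - (j-l) - l - k + 1 = 2 * n - j - k + 1 from by omega]
        have hch : ((j.choose l : ℝ)) * (l.factorial * (j-l).factorial) = j.factorial := by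
          have h := Nat.choose_mul_factorial_mul_factorial hlj
          rw [mul_assoc] at h
          exact_mod_cast h
        have f1 : ((k-j).factorial : ℝ) ≠ 0 := by positivity
        have f2 : ((2*n - j - k + 1).factorial : ℝ) ≠ 0 := by positivity
        have f3 : ((j-l).factorial : ℝ) ≠ 0 := by positivity
        have f4 : (l.factorial : ℝ) ≠ 0 := by positivity
        have f5 : (j.factorial : ℝ) ≠ 0 := by positivity
        field_simp
        linear_combination (-1:ℝ) * hch
      rw [Finset.sum_congr rfl step, ← Finset.sum_mul, halt]
      split_ifs with hj0
      · subst hj0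
        norm_num
      · rw [zero_mul]
    rw [Finset.sum_congr rfl inner, Finset.sum_ite_eq' (range (k+1)) 0
      (fun _ => (Nat.doubleFactorial (2 * n + 1) : ℝ) / (k.factorial * (2 * n - k + 1).factorial))]
    simp
  rw [hsum]
  have hd : ((2*n+1).doubleFactorial : ℝ) * (2^n * n.factorial) = ((2*n+1).factorial : ℝ) := by
    have h1 := Nat.factorial_eq_mul_doubleFactorial (2*n)
    have h2 := Nat.doubleFactorial_two_mul n
    rw [h2] at h1
    exact_mod_cast h1.symm
  have hc : (((2*n+1).choose k : ℝ)) * (k.factorial * (2*n-k+1).factorial)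
      = ((2*n+1).factorial : ℝ) := by
    have h := Nat.choose_mul_factorial_mul_factorial (show k ≤ 2*n+1 by omega)
    rw [show 2*n+1-k = 2*n-k+1 from by omega, mul_assoc] at h
    exact_mod_cast h
  have hz : (2:ℝ)^(-(n:ℤ)) = ((2:ℝ)^n)⁻¹ := by
    rw [zpow_neg, zpow_natCast]
  have h4 : (4:ℝ)^n = 2^n * 2^n := by
    rw [show (4:ℝ) = 2*2 by norm_num, mul_pow]
  have f1 : (k.factorial : ℝ) ≠ 0 := by positivity
  have f2 : ((2*n-k+1).factorial : ℝ) ≠ 0 := by positivity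
  have f3 : (2:ℝ)^n ≠ 0 := by positivity
  rw [hz, h4]
  field_simp
  linear_combination hd - hc

theorem monomial_in_shifted_chebV (n : ℕ) :
    (X : ℝ[X]) ^ n =
      ∑ k ∈ range (n + 1),
        C ((2 : ℝ) ^ (-(n : ℤ)) * n.factorial *
           ∑ v ∈ range (k + 1), ∑ l ∈ range (k - v + 1),
             (-1 : ℝ) ^ l * (Nat.doubleFactorial (2 * (n - v - l) + 1) : ℝ) /
             ((k - v - l).factorial * (2 * n - v - l - k + 1).factorial *
              v.factorial * l.factorial)) *
        (chebV (n - k)).comp (2 * X - 1) := by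
  have hX : (X : ℝ[X])^n = ∑ l ∈ range (n+1), C ((n.choose l : ℝ)) * (X-1)^l := by
    conv_lhs => rw [show (X : ℝ[X]) = (X-1)+1 from by ring]
    rw [add_pow]
    apply Finset.sum_congr rfl
    intro l hl
    rw [one_pow, mul_one, C_eq_natCast, mul_comm]
  have step1 : ∑ k ∈ range (n + 1),
        C ((2 : ℝ) ^ (-(n : ℤ)) * n.factorial *
           ∑ v ∈ range (k + 1), ∑ l ∈ range (k - v + 1),
             (-1 : ℝ) ^ l * (Nat.doubleFactorial (2 * (n - v - l) + 1) : ℝ) /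
             ((k - v - l).factorial * (2 * n - v - l - k + 1).factorial *
              v.factorial * l.factorial)) *
        (chebV (n - k)).comp (2 * X - 1)
      = ∑ k ∈ range (n+1), ∑ l ∈ range (n-k+1),
          C ((((2*n+1).choose k : ℝ) / 4^n) *
            ((4:ℝ)^l * (n-k+l).factorial / ((2*l).factorial * (n-k-l).factorial))) * (X-1)^l := by
    apply Finset.sum_congr rfl
    intro k hk
    have hkn : k ≤ n := Nat.lt_succ_iff.mp (Finset.mem_range.mp hk)
    rw [coeff_collapse n k hkn, chebV_comp (n-k), Finset.mul_sum]
    apply Finset.sum_congr rfl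
    intro l hl
    rw [← mul_assoc, ← C_mul]
  rw [step1, tri_swap n (fun k l =>
      C ((((2*n+1).choose k : ℝ) / 4^n) *
        ((4:ℝ)^l * (n-k+l).factorial / ((2*l).factorial * (n-k-l).factorial))) * (X-1)^l)]
  rw [hX]
  apply Finset.sum_congr rfl
  intro l hl
  have hln : l ≤ n := Nat.lt_succ_iff.mp (Finset.mem_range.mp hl)
  rw [← Finset.sum_mul, ← map_sum]
  congr 2
  have hterm : ∀ k ∈ range (n-l+1),
      (((2*n+1).choose k : ℝ) / 4^n) *
        ((4:ℝ)^l * (n-k+l).factorial / ((2*l).factorial * (n-k-l).factorial))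
      = (((2*n+1).choose k * ((n+l-k).choose (2*l)) : ℕ) : ℝ) * ((4:ℝ)^l / 4^n) := by
    intro k hkr
    have hknl : k ≤ n - l := Nat.lt_succ_iff.mp (Finset.mem_range.mp hkr)
    have hfac : ((n-k+l).factorial : ℝ)
        = ((n+l-k).choose (2*l) : ℝ) * ((2*l).factorial * (n-k-l).factorial) := by
      have h := Nat.choose_mul_factorial_mul_factorial (show 2*l ≤ n+l-k from by omega)
      rw [show n+l-k-2*l = n-k-l from by omega, mul_assoc] at h
      rw [show n-k+l = n+l-k from by omega]
      exact_mod_cast h.symm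
    rw [hfac]
    have f1 : ((2*l).factorial : ℝ) ≠ 0 := by positivity
    have f2 : ((n-k-l).factorial : ℝ) ≠ 0 := by positivity
    have f3 : (4:ℝ)^n ≠ 0 := by positivity
    push_cast
    field_simp
  rw [Finset.sum_congr rfl hterm, ← Finset.sum_mul, ← Nat.cast_sum]
  have hkey : ∑ k ∈ range (n-l+1), (2*n+1).choose k * ((n+l-k).choose (2*l))
      = 4^(n-l) * n.choose l := by
    have h := key_binom l (n-l)
    have e : ∀ k, 2*l+(n-l)-k = n+l-k := fun k => by omega
    rw [show 2*l+2*(n-l)+1 = 2*n+1 from by omega, show l+(n-l) = n from by omega] at h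
    simp only [e] at h
    exact h
  rw [hkey]
  have hpow : (4:ℝ)^(n-l) * 4^l = 4^n := by rw [← pow_add]; congr 1; omega
  have f3 : (4:ℝ)^n ≠ 0 := by positivity
  push_cast
  field_simp
  linear_combination (-1 : ℝ) * (n.choose l : ℝ) * hpow
end

section
/- For every natural number $n$, the identity of polynomials $x^n = \sum_{k=0}^{n} \Big( 2^{-n}\,(2(n-k)+1)\, n! \sum_{v=0}^{k} \sum_{l=0}^{k-v} \frac{(-1)^{l}\,(2(n-v-l)-1)!!}{(k-v-l)!\,(2n-v-l-k+1)!\; v!\; l!} \Big) W_{n-k}(2x-1)$ holds in $\mathbb{R}[x]$. -/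
set_option maxHeartbeats 1000000


open Polynomial Finset

noncomputable def wc (m l : ℕ) : ℝ :=
  ((2*m+1 : ℝ) * 4^l * ((m+l).choose (2*l) : ℝ)) / (2*l+1)

lemma wc_eq_zero {m l : ℕ} (h : m < l) : wc m l = 0 := by
  unfold wc
  rw [Nat.choose_eq_zero_of_lt (by omega)]
  simp

lemma fact_ne (k : ℕ) : ((k.factorial : ℝ)) ≠ 0 := by
  exact_mod_cast k.factorial_ne_zero

lemma P (m l : ℕ) : 4 * wc (m+1) l = wc (m+2) (l+1) - 2 * wc (m+1) (l+1) + wc m (l+1) := by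
  unfold wc
  rcases lt_or_ge (m+1) l with h | h
  · rw [Nat.choose_eq_zero_of_lt (by omega), Nat.choose_eq_zero_of_lt (by omega),
      Nat.choose_eq_zero_of_lt (by omega), Nat.choose_eq_zero_of_lt (by omega)]
    simp
  rcases eq_or_lt_of_le h with h1 | h1
  · -- l = m+1
    subst h1
    rw [show m+1+(m+1) = 2*(m+1) from by ring, Nat.choose_self,
      show m+2+(m+1+1) = 2*(m+1)+2 from by ring, show 2*(m+1+1) = 2*(m+1)+2 from by ring,
      Nat.choose_self, Nat.choose_eq_zero_of_lt (by omega), Nat.choose_eq_zero_of_lt (by omega)]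
    have h2 : ((2:ℝ)*(m+1)+1) ≠ 0 := by positivity
    have h3 : ((2:ℝ)*(m+2)+1) ≠ 0 := by positivity
    push_cast
    field_simp
    ring
  · -- l ≤ m : m = l + d
    obtain ⟨d, rfl⟩ : ∃ d, m = l + d := ⟨m - l, by omega⟩
    rcases Nat.eq_zero_or_pos d with rfl | hd
    · -- d = 0, m = l
      rw [show l+0+1+l = (2*l)+1 from by ring, Nat.choose_succ_self_right,
        show l+0+2+(l+1) = (2*l+2)+1 from by ring, show 2*(l+1) = 2*l+2 from by ring,
        Nat.choose_succ_self_right, show l+0+1+(l+1) = 2*l+2 from by ring, Nat.choose_self,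
        Nat.choose_eq_zero_of_lt (by omega)]
      have h2 : ((2:ℝ)*l+1) ≠ 0 := by positivity
      have h3 : ((2:ℝ)*(l+1)+1) ≠ 0 := by positivity
      push_cast
      field_simp
      ring
    · obtain ⟨e, rfl⟩ : ∃ e, d = e + 1 := ⟨d - 1, by omega⟩
      have c1 : (((l+(e+1)+1+l).choose (2*l) : ℕ) : ℝ)
          = (2*l+e+2).factorial / ((2*l).factorial * (e+2).factorial) := by
        rw [Nat.cast_choose ℝ (by omega), show l+(e+1)+1+l = 2*l+e+2 from by ring,
          show 2*l+e+2 - 2*l = e+2 from by omega]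
      have c2 : (((l+(e+1)+2+(l+1)).choose (2*(l+1)) : ℕ) : ℝ)
          = (2*l+e+4).factorial / ((2*l+2).factorial * (e+2).factorial) := by
        rw [Nat.cast_choose ℝ (by omega), show l+(e+1)+2+(l+1) = 2*l+e+4 from by ring,
          show 2*(l+1) = 2*l+2 from by ring, show 2*l+e+4 - (2*l+2) = e+2 from by omega]
      have c3 : (((l+(e+1)+1+(l+1)).choose (2*(l+1)) : ℕ) : ℝ)
          = (2*l+e+3).factorial / ((2*l+2).factorial * (e+1).factorial) := by
        rw [Nat.cast_choose ℝ (by omega), show l+(e+1)+1+(l+1) = 2*l+e+3 from by ring,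
          show 2*(l+1) = 2*l+2 from by ring, show 2*l+e+3 - (2*l+2) = e+1 from by omega]
      have c4 : (((l+(e+1)+(l+1)).choose (2*(l+1)) : ℕ) : ℝ)
          = (2*l+e+2).factorial / ((2*l+2).factorial * e.factorial) := by
        rw [Nat.cast_choose ℝ (by omega), show l+(e+1)+(l+1) = 2*l+e+2 from by ring,
          show 2*(l+1) = 2*l+2 from by ring, show 2*l+e+2 - (2*l+2) = e from by omega]
      rw [c1, c2, c3, c4]
      have f1 : ((2*l+e+4).factorial : ℝ) = (2*l+e+4) * (2*l+e+3) * (2*l+e+2).factorial := by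
        rw [show 2*l+e+4 = (2*l+e+3)+1 from by ring, Nat.factorial_succ,
          show 2*l+e+3 = (2*l+e+2)+1 from by ring, Nat.factorial_succ]
        push_cast; ring
      have f2 : ((2*l+e+3).factorial : ℝ) = (2*l+e+3) * (2*l+e+2).factorial := by
        rw [show 2*l+e+3 = (2*l+e+2)+1 from by ring, Nat.factorial_succ]; push_cast; ring
      have f3 : ((2*l+2).factorial : ℝ) = (2*l+2) * (2*l+1) * (2*l).factorial := by
        rw [show 2*l+2 = (2*l+1)+1 from by ring, Nat.factorial_succ,
          show 2*l+1 = (2*l)+1 from by ring, Nat.factorial_succ]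
        push_cast; ring
      have f4 : ((e+2).factorial : ℝ) = (e+2) * (e+1) * e.factorial := by
        rw [show e+2 = (e+1)+1 from by ring, Nat.factorial_succ, Nat.factorial_succ]
        push_cast; ring
      have f5 : ((e+1).factorial : ℝ) = (e+1) * e.factorial := by
        rw [Nat.factorial_succ]; push_cast; ring
      rw [f1, f2, f3, f4, f5]
      have h2 : ((2:ℝ)*l+1) ≠ 0 := by positivity
      have h3 : ((2:ℝ)*(l+1)+1) ≠ 0 := by positivity
      have h4 := fact_ne (2*l)
      have h5 := fact_ne e
      have h6 := fact_ne (2*l+e+2)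
      set F : ℝ := ((2*l+e+2).factorial : ℝ) with hF
      set G : ℝ := ((2*l).factorial : ℝ) with hG
      set E : ℝ := (e.factorial : ℝ) with hE
      push_cast
      field_simp
      ring

noncomputable def bc (n m : ℕ) : ℝ :=
  ((2*m+1 : ℝ) * ((2*n+1).choose (n+m+1) : ℝ)) / ((2*n+1) * 4^n)

lemma bc_eq_zero {n m : ℕ} (h : n < m) : bc n m = 0 := by
  unfold bc
  rw [Nat.choose_eq_zero_of_lt (by omega)]
  simp

lemma Q0 (n : ℕ) : 4 * bc (n+1) 0 = bc n 0 + bc n 1 := by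
  unfold bc
  rcases Nat.eq_zero_or_pos n with rfl | hn
  · norm_num
  obtain ⟨d, rfl⟩ : ∃ d, n = d + 1 := ⟨n - 1, by omega⟩
  have c1 : (((2*(d+1)+3).choose ((d+1)+1+0+1) : ℕ) : ℝ)
      = (2*d+5).factorial / ((d+3).factorial * (d+2).factorial) := by
    rw [Nat.cast_choose ℝ (by omega), show 2*(d+1)+3 = 2*d+5 from by ring,
      show (d+1)+1+0+1 = d+3 from by ring, show 2*d+5 - (d+3) = d+2 from by omega]
  have c2 : (((2*(d+1)+1).choose ((d+1)+0+1) : ℕ) : ℝ)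
      = (2*d+3).factorial / ((d+2).factorial * (d+1).factorial) := by
    rw [Nat.cast_choose ℝ (by omega), show 2*(d+1)+1 = 2*d+3 from by ring,
      show (d+1)+0+1 = d+2 from by ring, show 2*d+3 - (d+2) = d+1 from by omega]
  have c3 : (((2*(d+1)+1).choose ((d+1)+1+1) : ℕ) : ℝ)
      = (2*d+3).factorial / ((d+3).factorial * d.factorial) := by
    rw [Nat.cast_choose ℝ (by omega), show 2*(d+1)+1 = 2*d+3 from by ring,
      show (d+1)+1+1 = d+3 from by ring, show 2*d+3 - (d+3) = d from by omega]
  rw [show (2*((d+1)+1)+1 : ℕ) = 2*(d+1)+3 from by ring] at *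
  rw [c1, c2, c3]
  have f1 : ((2*d+5).factorial : ℝ) = (2*d+5) * (2*d+4) * (2*d+3).factorial := by
    rw [show 2*d+5 = (2*d+4)+1 from by ring, Nat.factorial_succ,
      show 2*d+4 = (2*d+3)+1 from by ring, Nat.factorial_succ]
    push_cast; ring
  have f2 : ((d+3).factorial : ℝ) = (d+3) * (d+2) * (d+1) * d.factorial := by
    rw [show d+3 = (d+2)+1 from by ring, Nat.factorial_succ,
      show d+2 = (d+1)+1 from by ring, Nat.factorial_succ, Nat.factorial_succ]
    push_cast; ring
  have f3 : ((d+2).factorial : ℝ) = (d+2) * (d+1) * d.factorial := by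
    rw [show d+2 = (d+1)+1 from by ring, Nat.factorial_succ, Nat.factorial_succ]
    push_cast; ring
  have f4 : ((d+1).factorial : ℝ) = (d+1) * d.factorial := by
    rw [Nat.factorial_succ]; push_cast; ring
  rw [f1, f2, f3, f4]
  have h4 := fact_ne (2*d+3)
  have h5 := fact_ne d
  push_cast
  field_simp
  ring

lemma Q1 (n j : ℕ) : 4 * bc (n+1) (j+1) = bc n j + 2 * bc n (j+1) + bc n (j+2) := by
  unfold bc
  rcases lt_or_ge n j with h | h
  · rw [Nat.choose_eq_zero_of_lt (by omega), Nat.choose_eq_zero_of_lt (by omega),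
      Nat.choose_eq_zero_of_lt (by omega), Nat.choose_eq_zero_of_lt (by omega)]
    simp
  rcases eq_or_lt_of_le h with h1 | h1
  · -- j = n
    subst h1
    rw [show 2*(j+1)+1 = (j+1)+(j+1)+1 from by ring, Nat.choose_self,
      show 2*j+1 = j+j+1 from by ring, Nat.choose_self,
      Nat.choose_eq_zero_of_lt (by omega), Nat.choose_eq_zero_of_lt (by omega)]
    have h2 : ((2:ℝ)*j+1) ≠ 0 := by positivity
    have h3 : ((2:ℝ)*(j+1)+1) ≠ 0 := by positivity
    push_cast
    field_simp
    ring
  rcases eq_or_lt_of_le (Nat.succ_le_of_lt h1) with h2 | h2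
  · -- n = j+1
    rw [← h2]
    rw [show 2*(j.succ+1)+1 = (2*j+4)+1 from by omega,
      show j.succ+1+(j+1)+1 = 2*j+4 from by omega, Nat.choose_succ_self_right,
      show 2*j.succ+1 = (2*j+2)+1 from by omega,
      show j.succ+j+1 = 2*j+2 from by omega, Nat.choose_succ_self_right,
      show j.succ+(j+1)+1 = (2*j+2)+1 from by omega, Nat.choose_self,
      show j.succ+(j+2)+1 = 2*j+4 from by omega, Nat.choose_eq_zero_of_lt (by omega)]
    have h3 : ((2:ℝ)*j.succ+1) ≠ 0 := by positivity
    have h4 : ((2:ℝ)*(j.succ+1)+1) ≠ 0 := by positivity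
    push_cast
    field_simp
    ring
  · -- n ≥ j+2
    obtain ⟨d, rfl⟩ : ∃ d, n = j + 2 + d := ⟨n - j - 2, by omega⟩
    have c1 : (((2*(j+2+d+1)+1).choose (j+2+d+1+(j+1)+1) : ℕ) : ℝ)
        = (2*j+2*d+7).factorial / ((2*j+d+5).factorial * (d+2).factorial) := by
      rw [Nat.cast_choose ℝ (by omega), show 2*(j+2+d+1)+1 = 2*j+2*d+7 from by omega,
        show j+2+d+1+(j+1)+1 = 2*j+d+5 from by omega,
        show 2*j+2*d+7 - (2*j+d+5) = d+2 from by omega]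
    have c2 : (((2*(j+2+d)+1).choose (j+2+d+j+1) : ℕ) : ℝ)
        = (2*j+2*d+5).factorial / ((2*j+d+3).factorial * (d+2).factorial) := by
      rw [Nat.cast_choose ℝ (by omega), show 2*(j+2+d)+1 = 2*j+2*d+5 from by omega,
        show j+2+d+j+1 = 2*j+d+3 from by omega,
        show 2*j+2*d+5 - (2*j+d+3) = d+2 from by omega]
    have c3 : (((2*(j+2+d)+1).choose (j+2+d+(j+1)+1) : ℕ) : ℝ)
        = (2*j+2*d+5).factorial / ((2*j+d+4).factorial * (d+1).factorial) := by
      rw [Nat.cast_choose ℝ (by omega), show 2*(j+2+d)+1 = 2*j+2*d+5 from by omega,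
        show j+2+d+(j+1)+1 = 2*j+d+4 from by omega,
        show 2*j+2*d+5 - (2*j+d+4) = d+1 from by omega]
    have c4 : (((2*(j+2+d)+1).choose (j+2+d+(j+2)+1) : ℕ) : ℝ)
        = (2*j+2*d+5).factorial / ((2*j+d+5).factorial * d.factorial) := by
      rw [Nat.cast_choose ℝ (by omega), show 2*(j+2+d)+1 = 2*j+2*d+5 from by omega,
        show j+2+d+(j+2)+1 = 2*j+d+5 from by omega,
        show 2*j+2*d+5 - (2*j+d+5) = d from by omega]
    rw [c1, c2, c3, c4]
    have f1 : ((2*j+2*d+7).factorial : ℝ) = (2*j+2*d+7) * (2*j+2*d+6) * (2*j+2*d+5).factorial := by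
      rw [show 2*j+2*d+7 = (2*j+2*d+6)+1 from by omega, Nat.factorial_succ,
        show 2*j+2*d+6 = (2*j+2*d+5)+1 from by omega, Nat.factorial_succ]
      push_cast; ring
    have f2 : ((2*j+d+5).factorial : ℝ) = (2*j+d+5) * (2*j+d+4) * (2*j+d+3).factorial := by
      rw [show 2*j+d+5 = (2*j+d+4)+1 from by omega, Nat.factorial_succ,
        show 2*j+d+4 = (2*j+d+3)+1 from by omega, Nat.factorial_succ]
      push_cast; ring
    have f3 : ((2*j+d+4).factorial : ℝ) = (2*j+d+4) * (2*j+d+3).factorial := by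
      rw [show 2*j+d+4 = (2*j+d+3)+1 from by omega, Nat.factorial_succ]
      push_cast; ring
    have f4 : ((d+2).factorial : ℝ) = (d+2) * (d+1) * d.factorial := by
      rw [show d+2 = (d+1)+1 from by omega, Nat.factorial_succ, Nat.factorial_succ]
      push_cast; ring
    have f5 : ((d+1).factorial : ℝ) = (d+1) * d.factorial := by
      rw [Nat.factorial_succ]; push_cast; ring
    rw [f1, f2, f3, f4, f5]
    have h4 := fact_ne (2*j+2*d+5)
    have h5 := fact_ne (2*j+d+3)
    have h6 := fact_ne d
    push_cast
    field_simp
    ring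

noncomputable def Wst (m : ℕ) : ℝ[X] := ∑ l ∈ range (m+1), C (wc m l) * (X - 1)^l

lemma Wst_ext {m N : ℕ} (h : m+1 ≤ N) : Wst m = ∑ l ∈ range N, C (wc m l) * (X - 1)^l := by
  unfold Wst
  apply Finset.sum_subset (Finset.range_subset_range.2 h)
  intro x hx hx2
  rw [wc_eq_zero (by simp only [Finset.mem_range] at hx2 ⊢; omega)]
  simp

lemma Wst_zero : Wst 0 = 1 := by
  unfold Wst wc
  norm_num

lemma Wst_one : Wst 1 = 4*X - 1 := by
  unfold Wst wc
  rw [Finset.sum_range_succ, Finset.sum_range_one]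
  norm_num [Nat.choose]
  rw [show ((4:ℝ[X]) = C 4) from (map_ofNat C 4).symm,
    show (C (3:ℝ)) = C 4 - 1 from by rw [← map_one C, ← map_sub]; norm_num]
  ring

lemma recW (s : ℕ) : (4:ℝ[X]) * ((X - 1) * Wst (s+1)) = Wst (s+2) - 2*Wst (s+1) + Wst s := by
  have e1 : Wst (s+2) - 2*Wst (s+1) + Wst s
      = ∑ l ∈ range (s+4), C (wc (s+2) l - 2*wc (s+1) l + wc s l) * (X-1)^l := by
    rw [Wst_ext (show s+2+1 ≤ s+4 by omega), Wst_ext (show s+1+1 ≤ s+4 by omega),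
      Wst_ext (show s+1 ≤ s+4 by omega), Finset.mul_sum, ← Finset.sum_sub_distrib,
      ← Finset.sum_add_distrib]
    apply Finset.sum_congr rfl
    intro l _
    simp only [C_sub, C_add, C_mul]
    rw [map_ofNat C 2]
    ring
  rw [e1, Finset.sum_range_succ' _ (s+3)]
  have h0 : wc (s+2) 0 - 2*wc (s+1) 0 + wc s 0 = 0 := by
    unfold wc
    simp [Nat.choose]
    push_cast
    ring
  rw [h0]
  have e2 : (4:ℝ[X]) * ((X - 1) * Wst (s+1))
      = ∑ l ∈ range (s+3), C (4 * wc (s+1) l) * (X-1)^(l+1) := by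
    rw [Wst_ext (show s+1+1 ≤ s+3 by omega), Finset.mul_sum, Finset.mul_sum]
    apply Finset.sum_congr rfl
    intro l _
    simp only [C_mul]
    rw [map_ofNat C 4]
    ring
  rw [e2]
  simp only [map_zero, zero_mul, add_zero, pow_zero, mul_one]
  apply Finset.sum_congr rfl
  intro l _
  rw [P]

noncomputable def Vv : ℕ → ℝ[X]
  | 0 => -1
  | (m+1) => Wst m

lemma mulX : ∀ m, (4:ℝ[X]) * (X * Wst m) = Wst (m+1) + 2*Wst m + Vv m
  | 0 => by
    rw [Wst_zero, Wst_one]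
    show _ = _ + _ + (-1)
    ring
  | (m+1) => by
    show _ = _ + _ + Wst m
    linear_combination recW m

lemma M (n : ℕ) : (X:ℝ[X])^n = ∑ m ∈ range (n+1), C (bc n m) * Wst m := by
  induction n with
  | zero =>
    rw [Finset.sum_range_one, Wst_zero]
    norm_num [bc]
  | succ n IH =>
    apply mul_left_cancel₀ (show (4:ℝ[X]) ≠ 0 from by norm_num)
    have hbc1 : bc n (n+1) = 0 := bc_eq_zero (by omega)
    have hbc2 : bc n (n+2) = 0 := bc_eq_zero (by omega)
    have hL : (4:ℝ[X]) * X^(n+1)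
        = (∑ i ∈ range (n+1), C (bc n i) * Wst (i+1))
          + (∑ m ∈ range (n+2), C (2 * bc n m) * Wst m)
          + ((∑ j ∈ range (n+2), C (bc n (j+1)) * Wst j) - C (bc n 0)) := by
      have step1 : (4:ℝ[X]) * X^(n+1)
          = ∑ m ∈ range (n+1), C (bc n m) * (Wst (m+1) + 2*Wst m + Vv m) := by
        rw [pow_succ, IH, Finset.sum_mul, Finset.mul_sum]
        refine Finset.sum_congr rfl fun m _ => ?_
        rw [← mulX m]
        ring
      rw [step1]
      have expand : ∀ m, C (bc n m) * (Wst (m+1) + 2*Wst m + Vv m)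
          = C (bc n m) * Wst (m+1) + C (2 * bc n m) * Wst m + C (bc n m) * Vv m := by
        intro m
        rw [C_mul, map_ofNat C 2]
        ring
      simp only [expand]
      rw [Finset.sum_add_distrib, Finset.sum_add_distrib]
      congr 1
      · congr 1
        apply Finset.sum_subset (Finset.range_subset_range.2 (by omega))
        intro x hx hx2
        simp only [Finset.mem_range] at hx hx2
        rw [bc_eq_zero (by omega)]
        simp
      · rw [Finset.sum_range_succ' _ n]
        have hv : ∀ i, C (bc n (i+1)) * Vv (i+1) = C (bc n (i+1)) * Wst i := fun i => rfl
        simp only [hv]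
        rw [Finset.sum_range_succ, Finset.sum_range_succ, hbc1, hbc2]
        simp only [map_zero, zero_mul, add_zero]
        rw [show (Vv 0) = -1 from rfl]
        ring
    rw [hL]
    rw [Finset.mul_sum]
    have hc4 : ∀ m, (4:ℝ[X]) * (C (bc (n+1) m) * Wst m) = C (4 * bc (n+1) m) * Wst m := by
      intro m
      rw [C_mul, map_ofNat C 4]
      ring
    simp only [hc4]
    conv_rhs => rw [Finset.sum_range_succ' _ (n+1)]
    have split : ∀ i, C (4 * bc (n+1) (i+1)) * Wst (i+1)
        = C (bc n i) * Wst (i+1) + C (2 * bc n (i+1)) * Wst (i+1)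
          + C (bc n (i+2)) * Wst (i+1) := by
      intro i
      rw [Q1, map_add, map_add]
      ring
    simp only [split]
    rw [Finset.sum_add_distrib, Finset.sum_add_distrib]
    have hS2 : ∑ m ∈ range (n+2), C (2 * bc n m) * Wst m
        = (∑ i ∈ range (n+1), C (2 * bc n (i+1)) * Wst (i+1)) + C (2 * bc n 0) * Wst 0 :=
      Finset.sum_range_succ' _ (n+1)
    have hS3 : ∑ j ∈ range (n+2), C (bc n (j+1)) * Wst j
        = (∑ i ∈ range (n+1), C (bc n (i+1+1)) * Wst (i+1)) + C (bc n (0+1)) * Wst 0 :=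
      Finset.sum_range_succ' _ (n+1)
    have q0 : C (4 * bc (n+1) 0) = C (bc n 0) + C (bc n 1) := by rw [Q0, map_add]
    rw [hS2, hS3, q0, Wst_zero]
    simp only [show ∀ x:ℕ, x+1+1 = x+2 from fun x => rfl]
    rw [show C (2 * bc n 0) = 2 * C (bc n 0) from by rw [C_mul, map_ofNat C 2]]
    ring

lemma dfact_ne (k : ℕ) : ((Nat.doubleFactorial k : ℕ) : ℝ) ≠ 0 := by
  exact_mod_cast (Nat.doubleFactorial_pos k).ne'

lemma oddDF (k : ℕ) : ((Nat.doubleFactorial (2*k+1) : ℕ) : ℝ) = (2*k+1).factorial / (2^k * k.factorial) := by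
  have h : (2*k+1).factorial = Nat.doubleFactorial (2*k+1) * (2^k * k.factorial) := by
    rw [show (2*k+1) = (2*k)+1 from rfl, Nat.factorial_eq_mul_doubleFactorial,
      Nat.doubleFactorial_two_mul]
  rw [eq_div_iff (by positivity)]
  exact_mod_cast h.symm

lemma poch_nat (m l : ℕ) :
    (ascPochhammer ℝ l).eval ((m:ℝ) + 1) = (m+l).factorial / m.factorial := by
  rw [eq_div_iff (fact_ne m), mul_comm]
  exact_mod_cast factorial_mul_ascPochhammer ℝ m l

lemma poch_half (l : ℕ) : ∀ j : ℕ,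
    (ascPochhammer ℝ j).eval ((l:ℝ) + 3/2)
      = (Nat.doubleFactorial (2*(l+j)+1) : ℕ) / ((Nat.doubleFactorial (2*l+1) : ℕ) * 2^j : ℝ)
  | 0 => by
    rw [ascPochhammer_zero, eval_one, show 2*(l+0)+1 = 2*l+1 from by ring, pow_zero, mul_one,
      div_self (dfact_ne _)]
  | (j+1) => by
    rw [ascPochhammer_succ_right, eval_mul, eval_add, eval_X, eval_natCast, poch_half l j]
    rw [show 2*(l+(j+1))+1 = (2*(l+j)+1)+2 from by ring, Nat.doubleFactorial_add_two]
    have h1 := dfact_ne (2*(l+j)+1)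
    have h2 := dfact_ne (2*l+1)
    have h3 : ((2:ℝ))^j ≠ 0 := by positivity
    field_simp
    push_cast
    ring

lemma chebW_comp (m : ℕ) : (chebW m).comp (2*X - 1) = Wst m := by
  have hhalf : C ((1:ℝ)/2) * (2*X - 1 - 1) = X - 1 := by
    have h2 : (C ((1:ℝ)/2)) * 2 = 1 := by
      rw [show ((2:ℝ[X])) = C 2 from (map_ofNat C 2).symm, ← map_mul]
      norm_num
    calc C ((1:ℝ)/2) * (2*X - 1 - 1) = (C ((1:ℝ)/2) * 2) * (X - 1) := by ring
    _ = X - 1 := by rw [h2]; ring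
  rw [chebW, jacobiP, Polynomial.mul_comp, Polynomial.C_comp, Polynomial.sum_comp]
  unfold Wst
  rw [Finset.mul_sum]
  refine Finset.sum_congr rfl fun l hl => ?_
  simp only [Finset.mem_range] at hl
  simp only [Polynomial.mul_comp, Polynomial.pow_comp, Polynomial.sub_comp,
    Polynomial.C_comp, Polynomial.X_comp, Polynomial.one_comp]
  rw [hhalf]
  rw [← mul_assoc, ← map_mul]
  congr 2
  rw [show (m:ℝ) + 1/2 + -(1/2) + 1 = (m:ℝ)+1 from by ring, poch_nat,
    show (1:ℝ)/2 + (l:ℝ) + 1 = (l:ℝ) + 3/2 from by ring, poch_half l (m-l),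
    show l + (m-l) = m from by omega]
  rw [oddDF m, oddDF l]
  unfold wc
  rw [Nat.cast_choose ℝ (show m ≤ 2*m from by omega),
    show 2*m - m = m from by omega,
    Nat.cast_choose ℝ (show 2*l ≤ m+l from by omega),
    show m+l - 2*l = m-l from by omega]
  rw [show (2:ℝ)^(2*m) = (2^m) * (2^m) from by rw [two_mul, pow_add],
    show (2:ℝ)^(m-l) = 2^m / 2^l from by
      rw [eq_div_iff (by positivity), ← pow_add]; congr 1; omega,
    show (4:ℝ)^l = 2^l * 2^l from by rw [show (4:ℝ) = 2*2 from by norm_num, mul_pow],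
    show ((2*m+1).factorial : ℝ) = (2*m+1) * (2*m).factorial from by
      rw [Nat.factorial_succ]; push_cast; ring,
    show ((2*l+1).factorial : ℝ) = (2*l+1) * (2*l).factorial from by
      rw [Nat.factorial_succ]; push_cast; ring]
  have n1 := fact_ne m
  have n2 := fact_ne l
  have n3 := fact_ne (m-l)
  have n4 := fact_ne (2*m)
  have n5 := fact_ne (2*l)
  have n6 : ((2:ℝ))^m ≠ 0 := by positivity
  have n7 : ((2:ℝ))^l ≠ 0 := by positivity
  have n8 : ((2:ℝ)*l+1) ≠ 0 := by positivity
  have n9 : ((2:ℝ)*m+1) ≠ 0 := by positivity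
  push_cast
  field_simp

lemma tri (k : ℕ) (f : ℕ → ℕ → ℝ) :
    ∑ v ∈ range (k+1), ∑ l ∈ range (k-v+1), f v l
      = ∑ j ∈ range (k+1), ∑ l ∈ range (j+1), f (j-l) l := by
  rw [Finset.sum_sigma', Finset.sum_sigma']
  refine Finset.sum_nbij' (fun (p : (_ : ℕ) × ℕ) ↦ (⟨p.1 + p.2, p.2⟩ : (_ : ℕ) × ℕ))
    (fun (p : (_ : ℕ) × ℕ) ↦ (⟨p.1 - p.2, p.2⟩ : (_ : ℕ) × ℕ)) ?_ ?_ ?_ ?_ ?_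
  · rintro ⟨a, b⟩ hp
    simp only [Finset.mem_sigma, Finset.mem_range] at hp ⊢
    omega
  · rintro ⟨a, b⟩ hp
    simp only [Finset.mem_sigma, Finset.mem_range] at hp ⊢
    omega
  · rintro ⟨a, b⟩ hp
    simp only [Finset.mem_sigma, Finset.mem_range] at hp
    simp only [Nat.add_sub_cancel]
  · rintro ⟨a, b⟩ hp
    simp only [Finset.mem_sigma, Finset.mem_range] at hp
    simp only []
    congr 1
    omega
  · rintro ⟨a, b⟩ hp
    simp only [Finset.mem_sigma, Finset.mem_range] at hp
    simp only [Nat.add_sub_cancel]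

lemma alt (j : ℕ) :
    ∑ l ∈ range (j+1), (-1:ℝ)^l / ((j-l).factorial * l.factorial)
      = if j = 0 then 1 else 0 := by
  have key : ∑ l ∈ range (j+1), (-1:ℝ)^l / ((j-l).factorial * l.factorial)
      = (∑ l ∈ range (j+1), (-1:ℝ)^l * (j.choose l)) / j.factorial := by
    rw [Finset.sum_div]
    refine Finset.sum_congr rfl fun l hl => ?_
    simp only [Finset.mem_range] at hl
    rw [Nat.cast_choose ℝ (show l ≤ j from by omega)]
    rw [show j - l = j - l from rfl]
    field_simp [fact_ne]
  rw [key]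
  have h := Int.alternating_sum_range_choose (n := j)
  have hR : ∑ l ∈ range (j+1), (-1:ℝ)^l * (j.choose l) = if j = 0 then 1 else 0 := by
    rcases Nat.eq_zero_or_pos j with rfl | hj
    · norm_num
    · rw [if_neg (by omega)]
      have h2 := Int.alternating_sum_range_choose_of_ne (show j ≠ 0 from by omega)
      exact_mod_cast h2
  rw [hR]
  split_ifs with h
  · subst h; norm_num
  · simp

lemma collapse {n k : ℕ} (hk : k ≤ n) :
    (∑ v ∈ range (k + 1), ∑ l ∈ range (k - v + 1),
      (-1 : ℝ) ^ l * (Nat.doubleFactorial (2 * (n - v - l) - 1) : ℝ) /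
        ((k - v - l).factorial * (2 * n - v - l - k + 1).factorial *
          v.factorial * l.factorial))
    = (Nat.doubleFactorial (2*n - 1) : ℝ) / (k.factorial * (2*n - k + 1).factorial) := by
  rw [tri]
  rw [Finset.sum_eq_single_of_mem 0 (Finset.mem_range.2 (by omega))]
  · rw [Finset.sum_range_one]
    norm_num
  · intro j hj hj0
    simp only [Finset.mem_range] at hj
    have step : ∀ l ∈ range (j+1),
        (-1 : ℝ) ^ l * (Nat.doubleFactorial (2 * (n - (j-l) - l) - 1) : ℝ) /
          ((k - (j-l) - l).factorial * (2 * n - (j-l) - l - k + 1).factorial *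
            (j-l).factorial * l.factorial)
        = ((Nat.doubleFactorial (2 * (n - j) - 1) : ℝ) /
            ((k - j).factorial * (2 * n - j - k + 1).factorial))
          * ((-1:ℝ)^l / ((j-l).factorial * l.factorial)) := by
      intro l hl
      simp only [Finset.mem_range] at hl
      rw [show n - (j-l) - l = n - j from by omega,
        show k - (j-l) - l = k - j from by omega,
        show 2*n - (j-l) - l = 2*n - j from by omega]
      field_simp
    rw [Finset.sum_congr rfl step, ← Finset.mul_sum, alt, if_neg hj0, mul_zero]

lemma coef_eq {n k : ℕ} (hk : k ≤ n) :
    (2 : ℝ) ^ (-(n : ℤ)) * (2 * ((n : ℝ) - k) + 1) * n.factorial *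
       (∑ v ∈ range (k + 1), ∑ l ∈ range (k - v + 1),
         (-1 : ℝ) ^ l * (Nat.doubleFactorial (2 * (n - v - l) - 1) : ℝ) /
         ((k - v - l).factorial * (2 * n - v - l - k + 1).factorial *
          v.factorial * l.factorial))
    = bc n (n-k) := by
  rw [collapse hk]
  unfold bc
  rw [show n + (n-k) + 1 = 2*n - k + 1 from by omega]
  rw [Nat.cast_choose ℝ (show 2*n-k+1 ≤ 2*n+1 from by omega),
    show 2*n+1 - (2*n-k+1) = k from by omega]
  rcases Nat.eq_zero_or_pos n with rfl | hn
  · interval_cases k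
    norm_num
  obtain ⟨p, rfl⟩ : ∃ p, n = p + 1 := ⟨n-1, by omega⟩
  rw [show 2*(p+1) - 1 = 2*p+1 from by omega, oddDF p]
  rw [zpow_neg, zpow_natCast]
  have hcast : ((((p+1) - k : ℕ) : ℝ)) = ((p+1):ℝ) - k := by
    push_cast [Nat.cast_sub (show k ≤ p+1 from hk)]
    ring
  rw [hcast]
  rw [show ((2*(p+1)+1).factorial : ℝ)
      = (2*(p+1)+1) * (2*(p+1)) * (2*p+1).factorial from by
    rw [show 2*(p+1)+1 = (2*p+1)+1+1 from by ring, Nat.factorial_succ, Nat.factorial_succ]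
    push_cast; ring]
  rw [show ((p+1).factorial : ℝ) = (p+1) * p.factorial from by
    rw [Nat.factorial_succ]; push_cast; ring]
  rw [show (2:ℝ)^(p+1) = 2 * 2^p from by rw [pow_succ]; ring,
    show (4:ℝ)^(p+1) = (2*2^p) * (2*2^p) from by
      rw [show (4:ℝ) = 2*2 from by norm_num, mul_pow, pow_succ]; ring]
  have n1 := fact_ne p
  have n2 := fact_ne k
  have n3 := fact_ne (2*p+1)
  have n4 := fact_ne (2*(p+1) - k + 1)
  have n5 : ((2:ℝ))^p ≠ 0 := by positivity
  have n6 : ((2:ℝ)*((p:ℝ)+1)+1) ≠ 0 := by positivity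
  push_cast
  field_simp

theorem monomial_in_shifted_chebW (n : ℕ) :
    (X : ℝ[X]) ^ n =
      ∑ k ∈ range (n + 1),
        C ((2 : ℝ) ^ (-(n : ℤ)) * (2 * ((n : ℝ) - k) + 1) * n.factorial *
           ∑ v ∈ range (k + 1), ∑ l ∈ range (k - v + 1),
             (-1 : ℝ) ^ l * (Nat.doubleFactorial (2 * (n - v - l) - 1) : ℝ) /
             ((k - v - l).factorial * (2 * n - v - l - k + 1).factorial *
              v.factorial * l.factorial)) *
        (chebW (n - k)).comp (2 * X - 1) := by
  have h1 : ∀ k ∈ range (n+1),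
      C ((2 : ℝ) ^ (-(n : ℤ)) * (2 * ((n : ℝ) - k) + 1) * n.factorial *
           ∑ v ∈ range (k + 1), ∑ l ∈ range (k - v + 1),
             (-1 : ℝ) ^ l * (Nat.doubleFactorial (2 * (n - v - l) - 1) : ℝ) /
             ((k - v - l).factorial * (2 * n - v - l - k + 1).factorial *
              v.factorial * l.factorial)) *
        (chebW (n - k)).comp (2 * X - 1)
      = C (bc n (n-k)) * Wst (n-k) := by
    intro k hk
    rw [chebW_comp, coef_eq (Finset.mem_range_succ_iff.mp hk)]
  rw [Finset.sum_congr rfl h1, M n, ← Finset.sum_range_reflect]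
  apply Finset.sum_congr rfl
  intro k hk
  simp only [Nat.add_sub_cancel]
end
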